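/- Let A, B be m×n complex matrices. Then A Aᴴ = B Bᴴ if and only if there exists a unitary n×n matrix V such that A = B V. -/

import Mathlib

open Matrix

noncomputable section MCAux

namespace MCAux

variable {m n : ℕ}

/-- `toEuclideanLin` is multiplicative (composition). -/
lemma toEuclideanLin_mul {p q r : ℕ} (M : Matrix (Fin p) (Fin q) ℂ)
    (N : Matrix (Fin q) (Fin r) ℂ) :
    Matrix.toEuclideanLin (M * N) =
      (Matrix.toEuclideanLin M).comp (Matrix.toEuclideanLin N) := by
  exact Matrix.toLin_mul (PiLp.basisFun 2 ℂ (Fin r)) (PiLp.basisFun 2 ℂ (Fin q))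
    (PiLp.basisFun 2 ℂ (Fin p)) M N

lemma norm_eq_of_hyp {A B : Matrix (Fin m) (Fin n) ℂ}
    (h : A * Aᴴ = B * Bᴴ) (x : EuclideanSpace ℂ (Fin m)) :
    ‖Matrix.toEuclideanLin Aᴴ x‖ = ‖Matrix.toEuclideanLin Bᴴ x‖ := by
  have key : ∀ C : Matrix (Fin m) (Fin n) ℂ,
      (‖Matrix.toEuclideanLin Cᴴ x‖ : ℝ) ^ 2 =
        RCLike.re (inner ℂ (Matrix.toEuclideanLin (C * Cᴴ) x) x : ℂ) := by
    intro C
    rw [toEuclideanLin_mul, LinearMap.comp_apply,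
      show Matrix.toEuclideanLin C = LinearMap.adjoint (Matrix.toEuclideanLin Cᴴ) by
        rw [← Matrix.toEuclideanLin_conjTranspose_eq_adjoint, Matrix.conjTranspose_conjTranspose],
      LinearMap.adjoint_inner_left, inner_self_eq_norm_sq]
  have := (key A).trans (by rw [h, ← key B])
  have h1 : (0:ℝ) ≤ ‖Matrix.toEuclideanLin Aᴴ x‖ := norm_nonneg _
  have h2 : (0:ℝ) ≤ ‖Matrix.toEuclideanLin Bᴴ x‖ := norm_nonneg _
  nlinarith [this]

end MCAux

end MCAux

theorem mul_conjTranspose_eq_iff_exists_unitary (m n : ℕ)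
    (A B : Matrix (Fin m) (Fin n) ℂ) :
    A * Aᴴ = B * Bᴴ ↔
      ∃ V : Matrix (Fin n) (Fin n) ℂ, V * Vᴴ = 1 ∧ Vᴴ * V = 1 ∧ A = B * V := by
  constructor
  · intro h
    classical
    set f : EuclideanSpace ℂ (Fin m) →ₗ[ℂ] EuclideanSpace ℂ (Fin n) :=
      Matrix.toEuclideanLin Aᴴ with hf
    set g : EuclideanSpace ℂ (Fin m) →ₗ[ℂ] EuclideanSpace ℂ (Fin n) :=
      Matrix.toEuclideanLin Bᴴ with hg
    have hnorm : ∀ x, ‖f x‖ = ‖g x‖ := fun x => MCAux.norm_eq_of_hyp h x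
    have hker : LinearMap.ker g ≤ LinearMap.ker f := by
      intro x hx
      simp only [LinearMap.mem_ker] at hx ⊢
      have := hnorm x
      rw [hx, norm_zero] at this
      exact norm_eq_zero.mp this
    -- the linear map from range g to the space, sending g x ↦ f x
    set φ : LinearMap.range g →ₗ[ℂ] EuclideanSpace ℂ (Fin n) :=
      ((LinearMap.ker g).liftQ f hker).comp g.quotKerEquivRange.symm.toLinearMap with hφ
    have hφg : ∀ x, φ ⟨g x, LinearMap.mem_range_self g x⟩ = f x := by
      intro x
      have h1 : g.quotKerEquivRange.symm ⟨g x, LinearMap.mem_range_self g x⟩ =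
          (LinearMap.ker g).mkQ x := g.quotKerEquivRange_symm_apply_image x _
      simp only [hφ, LinearMap.comp_apply, LinearEquiv.coe_toLinearMap, h1]
      exact Submodule.liftQ_apply _ f x
    have hφnorm : ∀ s : LinearMap.range g, ‖φ s‖ = ‖s‖ := by
      rintro ⟨-, x, rfl⟩
      rw [hφg x]
      rw [show ‖(⟨g x, LinearMap.mem_range_self g x⟩ : LinearMap.range g)‖ = ‖g x‖ from rfl]
      exact hnorm x
    set L : LinearMap.range g →ₗᵢ[ℂ] EuclideanSpace ℂ (Fin n) := ⟨φ, hφnorm⟩ with hL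
    set W := L.extend with hW
    have hWg : ∀ x, W (g x) = f x := by
      intro x
      have := L.extend_apply ⟨g x, LinearMap.mem_range_self g x⟩
      rw [show ((⟨g x, LinearMap.mem_range_self g x⟩ : LinearMap.range g) :
        EuclideanSpace ℂ (Fin n)) = g x from rfl] at this
      rw [this, hL]
      exact hφg x
    set U : Matrix (Fin n) (Fin n) ℂ := Matrix.toEuclideanLin.symm W.toLinearMap with hU
    have hUlin : Matrix.toEuclideanLin U = W.toLinearMap := Matrix.toEuclideanLin.apply_symm_apply _
    -- Uᴴ * U = 1
    have hadj : (LinearMap.adjoint W.toLinearMap).comp W.toLinearMap = LinearMap.id := by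
      apply LinearMap.ext
      intro x
      apply ext_inner_right ℂ
      intro y
      rw [LinearMap.comp_apply, LinearMap.adjoint_inner_left]
      exact W.inner_map_map x y
    have hU1 : Uᴴ * U = 1 := by
      apply Matrix.toEuclideanLin.injective
      rw [MCAux.toEuclideanLin_mul, Matrix.toEuclideanLin_conjTranspose_eq_adjoint, hUlin, hadj]
      ext x i
      simp [Matrix.toEuclideanLin_apply]
    have hU2 : U * Uᴴ = 1 := mul_eq_one_comm.mp hU1
    -- A = B * Uᴴ
    have hABU : Aᴴ = U * Bᴴ := by
      apply Matrix.toEuclideanLin.injective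
      rw [MCAux.toEuclideanLin_mul, hUlin]
      apply LinearMap.ext
      intro x
      exact (hWg x).symm
    refine ⟨Uᴴ, ?_, ?_, ?_⟩
    · rwa [Matrix.conjTranspose_conjTranspose]
    · rwa [Matrix.conjTranspose_conjTranspose]
    · have := congrArg Matrix.conjTranspose hABU
      rwa [Matrix.conjTranspose_conjTranspose, Matrix.conjTranspose_mul,
        Matrix.conjTranspose_conjTranspose] at this
  · rintro ⟨V, hV1, _, rfl⟩
    rw [Matrix.conjTranspose_mul, Matrix.mul_assoc, ← Matrix.mul_assoc V, hV1, Matrix.one_mul]
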